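/- Let v ≥ 0 and a be real numbers, and let γ denote the centered Gaussian probability measure on ℝ with variance v. Then ∫ cos²(a + s) dγ(s) = (1 + cos(2a) · e^{−2v}) / 2. In particular, for the GHZ parity measurement with a = Nω and v = Nσ_ε², the noise-averaged probability of outcome +1 is (1 + cos(2Nω) e^{−2Nσ_ε²})/2. -/

import Mathlib

open MeasureTheory ProbabilityTheory Real Complex
open scoped ENNReal NNReal

lemma gauss_aux (w : ℝ) (hw : 0 < w) :
    (∫ x : ℝ, Real.exp (-x ^ 2 / (2 * w)) * Real.cos (2 * x))
        = Real.sqrt (2 * π * w) * Real.exp (-2 * w) ∧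
      (∫ x : ℝ, Real.exp (-x ^ 2 / (2 * w)) * Real.sin (2 * x)) = 0 ∧
      Integrable (fun x : ℝ => Real.exp (-x ^ 2 / (2 * w)) * Real.cos (2 * x)) ∧
      Integrable (fun x : ℝ => Real.exp (-x ^ 2 / (2 * w)) * Real.sin (2 * x)) := by
  set b : ℂ := (((2 * w)⁻¹ : ℝ) : ℂ) with hbdef
  have hbre : (-b).re < 0 := by
    simp only [hbdef, Complex.neg_re, Complex.ofReal_re, neg_lt_zero]
    positivity
  have hint : Integrable (fun x : ℝ => Complex.exp (-b * x ^ 2 + 2 * Complex.I * x + 0)) :=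
    integrable_cexp_quadratic' hbre _ _
  have hJ : (∫ x : ℝ, Complex.exp (-b * x ^ 2 + 2 * Complex.I * x + 0))
      = (π / -(-b)) ^ (1 / 2 : ℂ) * Complex.exp (0 - (2 * Complex.I) ^ 2 / (4 * -b)) :=
    integral_cexp_quadratic hbre _ _
  have hb0 : b ≠ 0 := by
    simp only [hbdef, ne_eq, Complex.ofReal_eq_zero, inv_eq_zero]
    positivity
  have hw0 : (w : ℝ) ≠ 0 := hw.ne'
  have hz : ∀ x : ℝ, (-b * (x : ℂ) ^ 2 + 2 * Complex.I * x + 0)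
      = ((-x ^ 2 / (2 * w) : ℝ) : ℂ) + ((2 * x : ℝ) : ℂ) * Complex.I := by
    intro x
    rw [hbdef]
    push_cast
    have : ((w : ℂ)) ≠ 0 := by exact_mod_cast hw0
    field_simp
    ring
  have hre : ∀ x : ℝ, (Complex.exp (-b * x ^ 2 + 2 * Complex.I * x + 0)).re
      = Real.exp (-x ^ 2 / (2 * w)) * Real.cos (2 * x) := by
    intro x
    rw [hz, Complex.exp_add, ← Complex.ofReal_exp (-x ^ 2 / (2 * w))]
    simp only [Complex.mul_re, Complex.ofReal_re, Complex.ofReal_im,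
      Complex.exp_ofReal_mul_I_re, Complex.exp_ofReal_mul_I_im, zero_mul, sub_zero]
  have him : ∀ x : ℝ, (Complex.exp (-b * x ^ 2 + 2 * Complex.I * x + 0)).im
      = Real.exp (-x ^ 2 / (2 * w)) * Real.sin (2 * x) := by
    intro x
    rw [hz, Complex.exp_add, ← Complex.ofReal_exp (-x ^ 2 / (2 * w))]
    simp only [Complex.mul_im, Complex.ofReal_re, Complex.ofReal_im,
      Complex.exp_ofReal_mul_I_re, Complex.exp_ofReal_mul_I_im, zero_mul, add_zero]
  -- compute the RHS of hJ
  have hRHS : (π / -(-b)) ^ (1 / 2 : ℂ) * Complex.exp (0 - (2 * Complex.I) ^ 2 / (4 * -b))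
      = ((Real.sqrt (2 * π * w) * Real.exp (-2 * w) : ℝ) : ℂ) := by
    have h1 : (π / -(-b) : ℂ) = ((2 * π * w : ℝ) : ℂ) := by
      rw [neg_neg, hbdef]
      push_cast
      field_simp
    have h2 : ((2 * Complex.I) ^ 2 / (4 * -b) : ℂ) = ((2 * w : ℝ) : ℂ) := by
      rw [hbdef]
      have hw0 : (w : ℂ) ≠ 0 := by
        simp only [ne_eq, Complex.ofReal_eq_zero]; exact hw.ne'
      push_cast
      field_simp
      rw [Complex.I_sq]
      ring
    rw [h1, h2]
    have h3 : (((2 * π * w : ℝ) : ℂ)) ^ (1 / 2 : ℂ) = ((Real.sqrt (2 * π * w) : ℝ) : ℂ) := by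
      have hnn : (0 : ℝ) ≤ 2 * π * w := by positivity
      rw [show (1 / 2 : ℂ) = ((1 / 2 : ℝ) : ℂ) by norm_num,
        ← Complex.ofReal_cpow hnn, Real.sqrt_eq_rpow]
    rw [h3]
    rw [show ((0 : ℂ) - ((2 * w : ℝ) : ℂ)) = ((-2 * w : ℝ) : ℂ) by push_cast; ring]
    rw [← Complex.ofReal_exp, ← Complex.ofReal_mul]
  rw [hRHS] at hJ
  refine ⟨?_, ?_, ?_, ?_⟩
  · have := integral_re (𝕜 := ℂ) hint
    simp only [RCLike.re_to_complex] at this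
    simp_rw [hre] at this
    rw [this, hJ, Complex.ofReal_re]
  · have := integral_im (𝕜 := ℂ) hint
    simp only [RCLike.im_to_complex] at this
    simp_rw [him] at this
    rw [this, hJ, Complex.ofReal_im]
  · have heq : (fun x : ℝ => Real.exp (-x ^ 2 / (2 * w)) * Real.cos (2 * x))
        = fun x : ℝ => (Complex.exp (-b * x ^ 2 + 2 * Complex.I * x + 0)).re := by
      funext x; rw [hre]
    rw [heq]; exact hint.re
  · have heq : (fun x : ℝ => Real.exp (-x ^ 2 / (2 * w)) * Real.sin (2 * x))
        = fun x : ℝ => (Complex.exp (-b * x ^ 2 + 2 * Complex.I * x + 0)).im := by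
      funext x; rw [him]
    rw [heq]; exact hint.im

/-- For `v ≥ 0` and `a` real, integrating against the centered Gaussian
measure `γ` on `ℝ` with variance `v` gives
`∫ cos²(a + s) dγ(s) = (1 + cos(2a) · e^{−2v}) / 2`. In particular, for the GHZ parity
measurement with `a = Nω` and `v = Nσ_ε²`, the noise-averaged probability of outcome `+1`
is `(1 + cos(2Nω) e^{−2Nσ_ε²})/2`. -/
theorem gaussian_average_cos_sq (v : ℝ) (hv : 0 ≤ v) (a : ℝ) :
    ∫ s, (Real.cos (a + s)) ^ 2 ∂(gaussianReal 0 v.toNNReal)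
      = (1 + Real.cos (2 * a) * Real.exp (-2 * v)) / 2 := by
  rcases eq_or_lt_of_le hv with h0 | hw
  · rw [← h0]
    simp [Real.cos_sq]
    ring
  have hvne : v.toNNReal ≠ 0 := by
    simp [Real.toNNReal_eq_zero, not_le, hw]
  rw [ProbabilityTheory.gaussianReal_of_var_ne_zero 0 hvne]
  have hcoe : ((v.toNNReal : ℝ)) = v := Real.coe_toNNReal v hv
  -- express withDensity integral
  have hmeas : Measurable (fun x : ℝ => (ProbabilityTheory.gaussianPDFReal 0 v.toNNReal x).toNNReal) :=
    (ProbabilityTheory.measurable_gaussianPDFReal 0 v.toNNReal).real_toNNReal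
  have hwd : (volume.withDensity (ProbabilityTheory.gaussianPDF 0 v.toNNReal))
      = volume.withDensity (fun x => ((ProbabilityTheory.gaussianPDFReal 0 v.toNNReal x).toNNReal : ℝ≥0∞)) := by
    rfl
  rw [hwd, integral_withDensity_eq_integral_smul hmeas]
  simp only [NNReal.smul_def, smul_eq_mul]
  have hpdfnn : ∀ x, ((ProbabilityTheory.gaussianPDFReal 0 v.toNNReal x).toNNReal : ℝ)
      = ProbabilityTheory.gaussianPDFReal 0 v.toNNReal x := fun x =>
    Real.coe_toNNReal _ (ProbabilityTheory.gaussianPDFReal_nonneg _ _ _)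
  simp_rw [hpdfnn]
  -- pdf formula
  have hpdf : ∀ x : ℝ, ProbabilityTheory.gaussianPDFReal 0 v.toNNReal x
      = (Real.sqrt (2 * π * v))⁻¹ * Real.exp (-x ^ 2 / (2 * v)) := by
    intro x
    rw [ProbabilityTheory.gaussianPDFReal, hcoe, sub_zero]
  obtain ⟨hc, hs, hic, his⟩ := gauss_aux v hw
  have hsqrt_pos : 0 < Real.sqrt (2 * π * v) := Real.sqrt_pos.mpr (by positivity)
  -- expand cos²
  have hexp : ∀ x : ℝ, ProbabilityTheory.gaussianPDFReal 0 v.toNNReal x * Real.cos (a + x) ^ 2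
      = (1 / 2) * ProbabilityTheory.gaussianPDFReal 0 v.toNNReal x
        + (Real.cos (2 * a) / (2 * Real.sqrt (2 * π * v)))
            * (Real.exp (-x ^ 2 / (2 * v)) * Real.cos (2 * x))
        - (Real.sin (2 * a) / (2 * Real.sqrt (2 * π * v)))
            * (Real.exp (-x ^ 2 / (2 * v)) * Real.sin (2 * x)) := by
    intro x
    rw [hpdf, Real.cos_sq (a + x)]
    have h2 : Real.cos (2 * (a + x)) = Real.cos (2 * a + 2 * x) := by ring_nf
    have h3 : Real.cos (2 * a + 2 * x)
        = Real.cos (2 * a) * Real.cos (2 * x) - Real.sin (2 * a) * Real.sin (2 * x) :=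
      Real.cos_add _ _
    field_simp [h2, h3]
    rw [h2, h3]
    ring
  simp_rw [hexp]
  have hipdf : Integrable (fun x : ℝ => ProbabilityTheory.gaussianPDFReal 0 v.toNNReal x) :=
    ProbabilityTheory.integrable_gaussianPDFReal 0 v.toNNReal
  have h1 : Integrable (fun x : ℝ => 1 / 2 * ProbabilityTheory.gaussianPDFReal 0 v.toNNReal x
      + Real.cos (2 * a) / (2 * Real.sqrt (2 * π * v))
          * (Real.exp (-x ^ 2 / (2 * v)) * Real.cos (2 * x))) :=
    (hipdf.const_mul _).add (hic.const_mul _)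
  have h2 : Integrable (fun x : ℝ => Real.sin (2 * a) / (2 * Real.sqrt (2 * π * v))
      * (Real.exp (-x ^ 2 / (2 * v)) * Real.sin (2 * x))) := his.const_mul _
  rw [MeasureTheory.integral_sub h1 h2,
    MeasureTheory.integral_add (hipdf.const_mul _) (hic.const_mul _),
    MeasureTheory.integral_const_mul, MeasureTheory.integral_const_mul,
    MeasureTheory.integral_const_mul,
    ProbabilityTheory.integral_gaussianPDFReal_eq_one 0 hvne, hc, hs]
  field_simp
  ring
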